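/- There exists a constant C > 0 such that for every linear map A : ℝ² → ℝ² with det(A) > 0 satisfying ||A vᵢ| − 1| ≤ 1 for all i ∈ {1,2,3}, where v₁ = (1,0), v₂ = (1/2, √3/2), v₃ = v₁ − v₂, one has inf_{R ∈ SO(2)} |A − R|² ≤ C · max_{i ∈ {1,2,3}} ||A vᵢ| − 1|², where |M| = √(tr(MᵀM)) is the Frobenius norm on 2×2 matrices and |v| is the Euclidean norm on ℝ². -/

import Mathlib

open Matrix

/-- Frobenius norm of a 2×2 real matrix: `|M| = √(tr(MᵀM))`. -/
noncomputable def frobNorm (M : Matrix (Fin 2) (Fin 2) ℝ) : ℝ :=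
  Real.sqrt (Matrix.trace (Mᵀ * M))

/-- The group SO(2) of 2×2 rotation matrices. -/
def SO2 : Set (Matrix (Fin 2) (Fin 2) ℝ) := {R | Rᵀ * R = 1 ∧ R.det = 1}

/-- Euclidean norm of a vector in ℝ². -/
noncomputable def euclNorm (v : Fin 2 → ℝ) : ℝ := Real.sqrt (v 0 ^ 2 + v 1 ^ 2)

set_option maxHeartbeats 1000000

private lemma key_aux (a b c t W g D : ℝ) (ha : (7:ℝ)/8 ≤ a) (hD : 0 < D)
    (hW : 3*W = 2*b^2 + 2*c^2 - a^2) (hg : 3*g^2 = (b^2-c^2)^2)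
    (hDg : D^2 + g^2 = a^2*W)
    (hat : 1 - t ≤ a) (hat' : a ≤ 1 + t)
    (hbt : 1 - t ≤ b) (hbt' : b ≤ 1 + t)
    (hct : 1 - t ≤ c) (hct' : c ≤ 1 + t)
    (ht0 : 0 ≤ t) (ht : t ≤ 1/8) :
    (a-1)^2*a^2 + (D-a)^2 + g^2 ≤ 1536 * t^2 * a^2 := by
  have ha0 : (0:ℝ) < a := by linarith
  have hb0 : (0:ℝ) ≤ b := by linarith
  have hc0 : (0:ℝ) ≤ c := by linarith
  have ha2u : a^2 ≤ 2 := by nlinarith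
  have ha2l : (49:ℝ)/64 ≤ a^2 := by nlinarith
  have haU : a^2 - 1 ≤ 3*t := by nlinarith
  have haL : -(3*t) ≤ a^2 - 1 := by nlinarith
  have hbU : b^2 - 1 ≤ 3*t := by nlinarith
  have hbL : -(3*t) ≤ b^2 - 1 := by nlinarith
  have hcU : c^2 - 1 ≤ 3*t := by nlinarith
  have hcL : -(3*t) ≤ c^2 - 1 := by nlinarith
  have hWU : W - 1 ≤ 5*t := by linarith
  have hWL : -(5*t) ≤ W - 1 := by linarith
  have hd1 : b^2 - c^2 ≤ 6*t := by linarith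
  have hd2 : -(6*t) ≤ b^2 - c^2 := by linarith
  have hgsq : g^2 ≤ 12*t^2 := by
    nlinarith [mul_nonneg (by linarith : (0:ℝ) ≤ 6*t - (b^2-c^2))
      (by linarith : (0:ℝ) ≤ 6*t + (b^2-c^2))]
  have hgt : g^2 ≤ 3/2*t := by nlinarith
  have ht5 : (0:ℝ) ≤ 5*t := by linarith
  have hx1 : a^2*(W-1) ≤ 10*t := by
    have p1 := mul_le_mul_of_nonneg_left hWU (sq_nonneg a)
    have p2 := mul_le_mul_of_nonneg_right ha2u ht5
    nlinarith [p1, p2]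
  have hx2 : -(10*t) ≤ a^2*(W-1) := by
    have p1 := mul_le_mul_of_nonneg_left hWL (sq_nonneg a)
    have p2 := mul_le_mul_of_nonneg_right ha2u ht5
    nlinarith [p1, p2]
  have hyU : D^2 - a^2 ≤ 10*t := by nlinarith
  have hyL : -(12*t) ≤ D^2 - a^2 := by nlinarith
  have hy2 : (D^2 - a^2)^2 ≤ 144*t^2 := by
    nlinarith [mul_nonneg (by linarith : (0:ℝ) ≤ 12*t - (D^2-a^2))
      (by linarith : (0:ℝ) ≤ 12*t + (D^2-a^2))]
  have hDa : (D - a)^2 * a^2 ≤ (D^2 - a^2)^2 := by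
    have h1 : (D-a)^2 * (D+a)^2 = (D^2 - a^2)^2 := by ring
    have hsq : a^2 ≤ (D+a)^2 := by
      have := pow_le_pow_left₀ ha0.le (by linarith : a ≤ D + a) 2
      simpa using this
    have := mul_le_mul_of_nonneg_left hsq (sq_nonneg (D-a))
    calc (D-a)^2 * a^2 ≤ (D-a)^2 * (D+a)^2 := this
      _ = (D^2-a^2)^2 := h1
  have goalMul : ((a-1)^2*a^2 + (D-a)^2 + g^2) * a^2 ≤ (1536 * t^2 * a^2) * a^2 := by
    have h1 : (a-1)^2 ≤ t^2 := sq_le_sq' (by linarith) (by linarith)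
    have ha4 : a^2*a^2 ≤ 4 := by
      have := mul_le_mul ha2u ha2u (sq_nonneg a) (by norm_num : (0:ℝ) ≤ 2)
      linarith
    have h2 : (a-1)^2*(a^2*a^2) ≤ t^2*4 := mul_le_mul h1 ha4 (by positivity) (sq_nonneg t)
    have h3 : g^2*a^2 ≤ 12*t^2*2 := mul_le_mul hgsq ha2u (sq_nonneg a) (by positivity)
    have h4 : (49:ℝ)/64 * (49/64) ≤ a^2 * a^2 :=
      mul_le_mul ha2l ha2l (by norm_num) (by linarith)
    have h5 : (0:ℝ) ≤ 1536*t^2 := by positivity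
    have h6 := mul_le_mul_of_nonneg_left h4 h5
    have h7 : (D-a)^2*a^2 ≤ 144*t^2 := le_trans hDa hy2
    calc ((a-1)^2*a^2 + (D-a)^2 + g^2) * a^2
        = (a-1)^2*(a^2*a^2) + (D-a)^2*a^2 + g^2*a^2 := by ring
      _ ≤ t^2*4 + 144*t^2 + 12*t^2*2 := by linarith
      _ ≤ 1536*t^2*(49/64*(49/64)) := by linarith
      _ ≤ 1536*t^2*(a^2*a^2) := h6
      _ = (1536*t^2*a^2)*a^2 := by ring
  exact le_of_mul_le_mul_right goalMul (by positivity)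

private lemma frob_sq (M : Matrix (Fin 2) (Fin 2) ℝ) :
    frobNorm M ^ 2 = M 0 0^2 + M 0 1^2 + M 1 0^2 + M 1 1^2 := by
  have h : Matrix.trace (Mᵀ*M) = M 0 0^2 + M 0 1^2 + M 1 0^2 + M 1 1^2 := by
    simp [Matrix.trace, Matrix.mul_apply, Fin.sum_univ_two, Matrix.transpose_apply,
      Matrix.diag]
    ring
  rw [frobNorm, h, Real.sq_sqrt (by positivity)]

private lemma sInf_le_aux (A R : Matrix (Fin 2) (Fin 2) ℝ) (hR : R ∈ SO2) :
    sInf ((fun R => frobNorm (A - R)^2) '' SO2) ≤ frobNorm (A - R)^2 :=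
  csInf_le ⟨0, fun x hx => by obtain ⟨R', _, rfl⟩ := hx; positivity⟩ ⟨R, hR, rfl⟩

private lemma so2_rot (p r a : ℝ) (ha : 0 < a) (h : a^2 = p^2 + r^2) :
    (!![p/a, -(r/a); r/a, p/a] : Matrix (Fin 2) (Fin 2) ℝ) ∈ SO2 := by
  have hT : (!![p/a, -(r/a); r/a, p/a] : Matrix (Fin 2) (Fin 2) ℝ)ᵀ
      = !![p/a, r/a; -(r/a), p/a] := by
    ext i j; fin_cases i <;> fin_cases j <;> rfl
  constructor
  · rw [hT]
    ext i j
    fin_cases i <;> fin_cases j <;>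
      simp [Matrix.mul_apply, Fin.sum_univ_two, Matrix.one_apply] <;>
      field_simp <;> linarith [h]
  · rw [Matrix.det_fin_two_of]
    field_simp
    linarith [h]

private lemma so2_one : (1 : Matrix (Fin 2) (Fin 2) ℝ) ∈ SO2 := by
  constructor <;> simp [SO2]

private lemma fmul_aux (p q r s a : ℝ) (ha : 0 < a) (ha2 : a^2 = p^2 + r^2) :
    ((p - p/a)^2 + (q + r/a)^2 + (r - r/a)^2 + (s - p/a)^2) * a^2
      = (a-1)^2*a^2 + ((p*s - q*r)-a)^2 + (p*q + r*s)^2 := by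
  have hne : a ≠ 0 := ne_of_gt ha
  have expand : ((p - p/a)^2 + (q + r/a)^2 + (r - r/a)^2 + (s - p/a)^2) * a^2
      = (p*a - p)^2 + (q*a + r)^2 + (r*a - r)^2 + (s*a - p)^2 := by
    field_simp
  rw [expand]
  linear_combination (-((a-1)^2 - q^2 - s^2 + 1)) * ha2

private lemma large_aux (p q r s a W : ℝ) (ha2 : a^2 = p^2 + r^2) (hW : W = q^2 + s^2)
    (ha4 : a^2 ≤ 4) (hWle : W ≤ 16/3) :
    (p - 1)^2 + q^2 + r^2 + (s - 1)^2 ≤ 24 := by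
  nlinarith [sq_nonneg (p+1), sq_nonneg (s+1)]

/-- There exists a constant `C > 0` such that every linear map `A : ℝ² → ℝ²` with
`det A > 0` and `||A vᵢ| - 1| ≤ 1` for the three unit vectors `v₁ = (1,0)`,
`v₂ = (1/2, √3/2)`, `v₃ = v₁ - v₂` satisfies
`inf_{R ∈ SO(2)} |A - R|² ≤ C · max_i ||A vᵢ| - 1|²`. -/
theorem statement0 :
    ∃ C : ℝ, 0 < C ∧
      ∀ A : Matrix (Fin 2) (Fin 2) ℝ, 0 < A.det →
        |euclNorm (A.mulVec ![1, 0]) - 1| ≤ 1 →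
        |euclNorm (A.mulVec ![1 / 2, Real.sqrt 3 / 2]) - 1| ≤ 1 →
        |euclNorm (A.mulVec (![1, 0] - ![1 / 2, Real.sqrt 3 / 2])) - 1| ≤ 1 →
        sInf ((fun R => frobNorm (A - R) ^ 2) '' SO2) ≤
          C * max (|euclNorm (A.mulVec ![1, 0]) - 1| ^ 2)
              (max (|euclNorm (A.mulVec ![1 / 2, Real.sqrt 3 / 2]) - 1| ^ 2)
                (|euclNorm (A.mulVec (![1, 0] - ![1 / 2, Real.sqrt 3 / 2])) - 1| ^ 2)) := by
  refine ⟨1536, by norm_num, fun A hdet h1 h2 h3 => ?_⟩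
  set p := A 0 0 with hp
  set q := A 0 1 with hq
  set r := A 1 0 with hr
  set s := A 1 1 with hs
  have hv1 : A.mulVec ![1, 0] = ![p, r] := by
    funext i; fin_cases i <;> simp [Matrix.mulVec, dotProduct, Fin.sum_univ_two] <;> rfl
  have hv2 : A.mulVec ![1/2, Real.sqrt 3/2]
      = ![p/2 + q*(Real.sqrt 3/2), r/2 + s*(Real.sqrt 3/2)] := by
    funext i; fin_cases i <;> simp [Matrix.mulVec, dotProduct, Fin.sum_univ_two] <;> ring
  have hv3 : A.mulVec (![1, 0] - ![1/2, Real.sqrt 3/2])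
      = ![p/2 - q*(Real.sqrt 3/2), r/2 - s*(Real.sqrt 3/2)] := by
    funext i; fin_cases i <;> simp [Matrix.mulVec, dotProduct, Fin.sum_univ_two] <;> ring
  set a := euclNorm (A.mulVec ![1, 0]) with hadef
  set b := euclNorm (A.mulVec ![1/2, Real.sqrt 3/2]) with hbdef
  set c := euclNorm (A.mulVec (![1, 0] - ![1/2, Real.sqrt 3/2])) with hcdef
  have h3sq : Real.sqrt 3 ^ 2 = 3 := Real.sq_sqrt (by norm_num)
  have ha2 : a^2 = p^2 + r^2 := by
    rw [hadef, hv1]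
    simp only [euclNorm, Matrix.cons_val_zero, Matrix.cons_val_one, Matrix.head_cons]
    exact Real.sq_sqrt (by positivity)
  have hb2 : b^2 = (p/2 + q*(Real.sqrt 3/2))^2 + (r/2 + s*(Real.sqrt 3/2))^2 := by
    rw [hbdef, hv2]
    simp only [euclNorm, Matrix.cons_val_zero, Matrix.cons_val_one, Matrix.head_cons]
    exact Real.sq_sqrt (by positivity)
  have hc2 : c^2 = (p/2 - q*(Real.sqrt 3/2))^2 + (r/2 - s*(Real.sqrt 3/2))^2 := by
    rw [hcdef, hv3]
    simp only [euclNorm, Matrix.cons_val_zero, Matrix.cons_val_one, Matrix.head_cons]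
    exact Real.sq_sqrt (by positivity)
  set W := q^2 + s^2 with hWdef
  set g := p*q + r*s with hgdef
  set D := p*s - q*r with hDdef
  have hD : 0 < D := by
    have : A.det = p*s - q*r := by rw [Matrix.det_fin_two]
    rw [hDdef]; linarith [this ▸ hdet]
  have hW : 3*W = 2*b^2 + 2*c^2 - a^2 := by
    rw [hWdef]
    linear_combination -2*hb2 - 2*hc2 + ha2 - (q^2+s^2)*h3sq
  have hbc : b^2 - c^2 = Real.sqrt 3 * g := by
    rw [hgdef]; linear_combination hb2 - hc2
  have hg : 3*g^2 = (b^2 - c^2)^2 := by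
    rw [hbc]; linear_combination (-g^2)*h3sq
  have hDg : D^2 + g^2 = a^2*W := by
    rw [hDdef, hgdef, hWdef, ha2]; ring
  -- a, b, c nonneg
  have ha0 : 0 ≤ a := Real.sqrt_nonneg _
  have hb0 : 0 ≤ b := Real.sqrt_nonneg _
  have hc0 : 0 ≤ c := Real.sqrt_nonneg _
  set t := max (|a - 1|) (max (|b - 1|) (|c - 1|)) with htdef
  have hta : |a - 1| ≤ t := le_max_left _ _
  have htb : |b - 1| ≤ t := le_trans (le_max_left _ _) (le_max_right _ _)
  have htc : |c - 1| ≤ t := le_trans (le_max_right _ _) (le_max_right _ _)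
  have ht0 : 0 ≤ t := le_trans (abs_nonneg _) hta
  have ht1 : t ≤ 1 := max_le h1 (max_le h2 h3)
  have haL := (abs_le.mp hta).1
  have haU := (abs_le.mp hta).2
  have hbL := (abs_le.mp htb).1
  have hbU := (abs_le.mp htb).2
  have hcL := (abs_le.mp htc).1
  have hcU := (abs_le.mp htc).2
  set M := max (|a - 1| ^ 2) (max (|b - 1| ^ 2) (|c - 1| ^ 2)) with hMdef
  have hM : t^2 ≤ M := by
    rcases max_choice (|a - 1|) (max (|b - 1|) (|c - 1|)) with h | h
    · rw [htdef, h]; exact le_max_left _ _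
    · rcases max_choice (|b - 1|) (|c - 1|) with h' | h'
      · rw [htdef, h, h']
        exact le_trans (le_max_left _ _) (le_max_right _ _)
      · rw [htdef, h, h']
        exact le_trans (le_max_right _ _) (le_max_right _ _)
  have hMfinal : 1536 * t^2 ≤ 1536 * M := by linarith
  by_cases hcase : t ≤ 1/8
  · -- small strain: use the rotation aligned with the first column
    have ha78 : (7:ℝ)/8 ≤ a := by linarith
    have hapos : 0 < a := by linarith
    set R : Matrix (Fin 2) (Fin 2) ℝ := !![p/a, -(r/a); r/a, p/a] with hRdef
    have hR : R ∈ SO2 := so2_rot p r a hapos ha2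
    refine le_trans (sInf_le_aux A R hR) (le_trans ?_ hMfinal)
    have hfs : frobNorm (A - R)^2
        = (p - p/a)^2 + (q + r/a)^2 + (r - r/a)^2 + (s - p/a)^2 := by
      rw [frob_sq]
      simp only [Matrix.sub_apply, hRdef, Matrix.cons_val', Matrix.cons_val_zero,
        Matrix.cons_val_one, Matrix.head_cons, Matrix.empty_val',
        Matrix.cons_val_fin_one, Matrix.head_fin_const, Matrix.of_apply]
      ring
    rw [hfs]
    have hkey := key_aux a b c t W g D ha78 hD hW hg hDg (by linarith) (by linarith) (by linarith) (by linarith) (by linarith) (by linarith) ht0 hcase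
    have hFmul : ((p - p/a)^2 + (q + r/a)^2 + (r - r/a)^2 + (s - p/a)^2) * a^2
        = (a-1)^2*a^2 + (D-a)^2 + g^2 := by
      rw [hDdef, hgdef]
      exact fmul_aux p q r s a hapos ha2
    have : ((p - p/a)^2 + (q + r/a)^2 + (r - r/a)^2 + (s - p/a)^2) * a^2
        ≤ (1536 * t^2) * a^2 := by
      rw [hFmul]; linarith [hkey]
    exact le_of_mul_le_mul_right this (by positivity)
  · -- large strain: use the identity rotation
    push_neg at hcase
    refine le_trans (sInf_le_aux A 1 so2_one) (le_trans ?_ hMfinal)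
    have hfs : frobNorm (A - 1)^2 = (p - 1)^2 + q^2 + r^2 + (s - 1)^2 := by
      rw [frob_sq]
      simp [Matrix.sub_apply, Matrix.one_apply]
      rfl
    rw [hfs]
    have ha4 : a^2 ≤ 4 := by
      have h' := pow_le_pow_left₀ ha0 (show a ≤ 2 by linarith) 2
      norm_num at h'; linarith
    have hb4 : b^2 ≤ 4 := by
      have h' := pow_le_pow_left₀ hb0 (show b ≤ 2 by linarith) 2
      norm_num at h'; linarith
    have hc4 : c^2 ≤ 4 := by
      have h' := pow_le_pow_left₀ hc0 (show c ≤ 2 by linarith) 2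
      norm_num at h'; linarith
    have hWle : W ≤ 16/3 := by linarith [sq_nonneg a]
    have hbound := large_aux p q r s a W ha2 hWdef ha4 hWle
    have ht8 : 24 ≤ 1536 * t^2 := by
      have h' := pow_le_pow_left₀ (by norm_num : (0:ℝ) ≤ 1/8) hcase.le 2
      norm_num at h'; linarith
    linarith
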